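/- Let 𝕂 = {x ∈ ℓ² : xᵢ ≥ 0 for all i ∈ ℕ} be the positive cone in ℓ² with metric projection P_𝕂, and let x ∈ ℓ² satisfy |xᵢ| > 0 for all i ∈ ℕ. Then for every w ∈ ℓ² with w ≠ 0, the one-sided Gâteaux directional derivative of P_𝕂 at x along w exists and equals B(x; w), where (B(x; w))ᵢ = wᵢ if xᵢ > 0 and (B(x; w))ᵢ = 0 if xᵢ ≤ 0, for all i ∈ ℕ. That is, (P_𝕂(x + t·w) − P_𝕂(x))/t → B(x; w) as t → 0⁺. -/

import Mathlib

open Filter Topology Metric Set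
open scoped ENNReal

private lemma two_toReal_pos : (0:ℝ) < (2 : ℝ≥0∞).toReal := by norm_num

private lemma memlp_of_abs_le {f : ℕ → ℝ} {g : lp (fun _ : ℕ => ℝ) 2}
    (h : ∀ i, |f i| ≤ |g i|) : Memℓp f 2 := by
  apply memℓp_gen
  refine Summable.of_nonneg_of_le (fun i => by positivity)
    (fun i => ?_) ((lp.memℓp g).summable two_toReal_pos)
  have h2 : (2 : ℝ≥0∞).toReal = 2 := by norm_num
  rw [h2]
  have := h i
  simp only [Real.norm_eq_abs]
  exact Real.rpow_le_rpow (abs_nonneg _) this (by norm_num)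

private lemma norm_mono_lp2 {f g : lp (fun _ : ℕ => ℝ) 2}
    (h : ∀ i, ‖f i‖ ≤ ‖g i‖) : ‖f‖ ≤ ‖g‖ := by
  have h1 := lp.norm_rpow_eq_tsum two_toReal_pos f
  have h2 := lp.norm_rpow_eq_tsum two_toReal_pos g
  have hle : ‖f‖ ^ (2:ℝ≥0∞).toReal ≤ ‖g‖ ^ (2:ℝ≥0∞).toReal := by
    rw [h1, h2]
    exact Summable.tsum_le_tsum (fun i => Real.rpow_le_rpow (norm_nonneg _) (h i) (by positivity))
      ((lp.memℓp f).summable two_toReal_pos) ((lp.memℓp g).summable two_toReal_pos)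
  have h2' : (2 : ℝ≥0∞).toReal = ((2:ℕ):ℝ) := by norm_num
  rw [h2', Real.rpow_natCast, Real.rpow_natCast] at hle
  nlinarith [norm_nonneg f, norm_nonneg g]

/-- The metric projection onto the positive cone is the coordinatewise positive part. -/
private lemma proj_formula (P : lp (fun _ : ℕ => ℝ) 2 → lp (fun _ : ℕ => ℝ) 2)
    (hP : ∀ x, (∀ i : ℕ, 0 ≤ P x i) ∧
      ∀ z : lp (fun _ : ℕ => ℝ) 2, (∀ i : ℕ, 0 ≤ z i) → ‖x - P x‖ ≤ ‖x - z‖)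
    (y : lp (fun _ : ℕ => ℝ) 2) (i : ℕ) : P y i = max (y i) 0 := by
  have hzmem : Memℓp (fun j => max (y j) 0) 2 := by
    apply memlp_of_abs_le (g := y)
    intro j
    rcases le_total 0 (y j) with h | h
    · rw [max_eq_left h]
    · rw [max_eq_right h]; simp [abs_nonneg]
  set z : lp (fun _ : ℕ => ℝ) 2 := ⟨fun j => max (y j) 0, hzmem⟩ with hz
  have hzc : ∀ j, z j = max (y j) 0 := fun j => rfl
  have hznn : ∀ j, 0 ≤ z j := fun j => by rw [hzc]; exact le_max_right _ _
  have hPnn := (hP y).1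
  have h1 : ‖y - P y‖ ≤ ‖y - z‖ := (hP y).2 z hznn
  have hle : ∀ j, ‖(y - z) j‖ ≤ ‖(y - P y) j‖ := by
    intro j
    have hc1 : (y - z) j = y j - max (y j) 0 := by
      rw [lp.coeFn_sub]; simp [hzc]
    have hc2 : (y - P y) j = y j - P y j := by rw [lp.coeFn_sub]; simp
    rw [hc1, hc2, Real.norm_eq_abs, Real.norm_eq_abs]
    rcases le_total 0 (y j) with h | h
    · rw [max_eq_left h]; simp [abs_nonneg]
    · rw [max_eq_right h, sub_zero]
      have := hPnn j
      rcases abs_cases (y j - P y j) with ⟨he, _⟩ | ⟨he, _⟩ <;>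
        rcases abs_cases (y j) with ⟨he2, _⟩ | ⟨he2, _⟩ <;> linarith
  have h2 : ‖y - z‖ ≤ ‖y - P y‖ := norm_mono_lp2 hle
  have heq : ‖y - z‖ = ‖y - P y‖ := le_antisymm h2 h1
  -- termwise equality of squares
  have hsum1 := lp.norm_rpow_eq_tsum two_toReal_pos (y - z)
  have hsum2 := lp.norm_rpow_eq_tsum two_toReal_pos (y - P y)
  have htsum : ∑' j, ‖(y - z) j‖ ^ (2:ℝ≥0∞).toReal
      = ∑' j, ‖(y - P y) j‖ ^ (2:ℝ≥0∞).toReal := by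
    rw [← hsum1, ← hsum2, heq]
  have hterm : ∀ j, ‖(y - z) j‖ ^ (2:ℝ≥0∞).toReal = ‖(y - P y) j‖ ^ (2:ℝ≥0∞).toReal := by
    intro j
    by_contra hne
    have hlt : ‖(y - z) j‖ ^ (2:ℝ≥0∞).toReal < ‖(y - P y) j‖ ^ (2:ℝ≥0∞).toReal := by
      refine lt_of_le_of_ne ?_ hne
      exact Real.rpow_le_rpow (norm_nonneg _) (hle j) (by positivity)
    have := Summable.tsum_lt_tsum
      (f := fun j => ‖(y - z) j‖ ^ (2:ℝ≥0∞).toReal)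
      (g := fun j => ‖(y - P y) j‖ ^ (2:ℝ≥0∞).toReal)
      (fun k => Real.rpow_le_rpow (norm_nonneg _) (hle k) (by positivity))
      hlt ((lp.memℓp (y - z)).summable two_toReal_pos)
      ((lp.memℓp (y - P y)).summable two_toReal_pos)
    rw [htsum] at this
    exact lt_irrefl _ this
  have habs : |y i - max (y i) 0| = |y i - P y i| := by
    have := hterm i
    have hc1 : (y - z) i = y i - max (y i) 0 := by rw [lp.coeFn_sub]; simp [hzc]
    have hc2 : (y - P y) i = y i - P y i := by rw [lp.coeFn_sub]; simp
    rw [hc1, hc2, Real.norm_eq_abs, Real.norm_eq_abs] at this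
    have h2' : (2 : ℝ≥0∞).toReal = ((2:ℕ):ℝ) := by norm_num
    rw [h2', Real.rpow_natCast, Real.rpow_natCast] at this
    have ha := abs_nonneg (y i - max (y i) 0)
    have hb := abs_nonneg (y i - P y i)
    nlinarith [this]
  have hp := hPnn i
  rcases le_total 0 (y i) with h | h
  · rw [max_eq_left h] at habs ⊢
    simp only [sub_self, abs_zero] at habs
    have := abs_eq_zero.mp habs.symm
    linarith
  · rw [max_eq_right h, sub_zero] at habs
    rw [max_eq_right h]
    rcases abs_cases (y i - P y i) with ⟨he, _⟩ | ⟨he, _⟩ <;>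
      rcases abs_cases (y i) with ⟨he2, _⟩ | ⟨he2, _⟩ <;> linarith

set_option maxHeartbeats 2000000 in
/-- Let `P` be the metric projection onto the positive cone `𝕂` of `ℓ²` and let `x` have
all coordinates nonzero.  Then for every nonzero `w`, the one-sided Gâteaux directional
derivative of `P` at `x` along `w` exists and equals `B(x; w)`, the element of `ℓ²`
whose `i`-th coordinate is `wᵢ` if `xᵢ > 0` and `0` otherwise. -/
theorem gateaux_proj_positiveCone_lp2_mixed
    (P : lp (fun _ : ℕ => ℝ) 2 → lp (fun _ : ℕ => ℝ) 2)
    (hP : ∀ x, (∀ i : ℕ, 0 ≤ P x i) ∧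
      ∀ z : lp (fun _ : ℕ => ℝ) 2, (∀ i : ℕ, 0 ≤ z i) → ‖x - P x‖ ≤ ‖x - z‖)
    (x : lp (fun _ : ℕ => ℝ) 2) (hx : ∀ i : ℕ, x i ≠ 0) :
    ∀ w : lp (fun _ : ℕ => ℝ) 2, w ≠ 0 →
      ∃ b : lp (fun _ : ℕ => ℝ) 2,
        (∀ i : ℕ, b i = if 0 < x i then w i else 0) ∧
        Filter.Tendsto (fun t : ℝ => t⁻¹ • (P (x + t • w) - P x)) (𝓝[>] (0 : ℝ))
          (𝓝 b) := by
  intro w hw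
  have hbmem : Memℓp (fun i => if 0 < x i then w i else 0) 2 := by
    apply memlp_of_abs_le (g := w)
    intro i
    split_ifs <;> simp [abs_nonneg]
  set b : lp (fun _ : ℕ => ℝ) 2 := ⟨fun i => if 0 < x i then w i else 0, hbmem⟩ with hbdef
  have hbc : ∀ i, b i = if 0 < x i then w i else 0 := fun i => rfl
  refine ⟨b, hbc, ?_⟩
  -- coordinates of the difference quotient minus b
  have hcoord : ∀ (t : ℝ), t ≠ 0 → ∀ i,
      (t⁻¹ • (P (x + t • w) - P x) - b) i
        = t⁻¹ * (max (x i + t * w i) 0 - max (x i) 0) - b i := by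
    intro t ht i
    have h1 : (t⁻¹ • (P (x + t • w) - P x) - b) i
        = t⁻¹ * ((P (x + t • w)) i - (P x) i) - b i := by
      rw [lp.coeFn_sub, Pi.sub_apply, lp.coeFn_smul, Pi.smul_apply, lp.coeFn_sub,
        Pi.sub_apply, smul_eq_mul]
    rw [h1, proj_formula P hP, proj_formula P hP]
    have : (x + t • w) i = x i + t * w i := by
      rw [lp.coeFn_add, Pi.add_apply, lp.coeFn_smul, Pi.smul_apply, smul_eq_mul]
    rw [this]
  -- coordinatewise bounds
  have hbound : ∀ (t : ℝ), 0 < t → ∀ i,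
      |t⁻¹ * (max (x i + t * w i) 0 - max (x i) 0) - b i| ≤ |w i| ∧
      (t * |w i| ≤ |x i| → t⁻¹ * (max (x i + t * w i) 0 - max (x i) 0) - b i = 0) := by
    intro t ht i
    have ht' : t ≠ 0 := ne_of_gt ht
    have hinv : t * t⁻¹ = 1 := mul_inv_cancel₀ ht'
    have hinvpos : 0 < t⁻¹ := inv_pos.mpr ht
    rw [hbc]
    rcases lt_trichotomy (x i) 0 with hxi | hxi | hxi
    · -- x i < 0
      rw [if_neg (by linarith), max_eq_right (le_of_lt hxi)]
      have habs : |x i| = -(x i) := abs_of_neg hxi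
      constructor
      · rcases le_total (x i + t * w i) 0 with hc | hc
        · rw [max_eq_right hc]; simp [abs_nonneg]
        · rw [max_eq_left hc]
          have hval : t⁻¹ * (x i + t * w i - 0) - 0 = t⁻¹ * x i + w i := by
            field_simp; ring
          have hkey : 0 ≤ t⁻¹ * x i + w i := by
            rw [← hval]
            have := mul_nonneg (le_of_lt hinvpos) (by linarith : (0:ℝ) ≤ x i + t * w i)
            linarith
          have hkey2 : t⁻¹ * x i < 0 := by
            apply mul_neg_of_pos_of_neg hinvpos hxi
          rw [hval, abs_le]
          constructor
          · have := abs_nonneg (w i); linarith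
          · have := le_abs_self (w i); linarith
      · intro hsmall
        rw [habs] at hsmall
        have : x i + t * w i ≤ 0 := by
          have h1 : t * w i ≤ t * |w i| := by
            have := le_abs_self (w i); nlinarith
          linarith
        rw [max_eq_right this]; ring
    · exact absurd hxi (hx i)
    · -- 0 < x i
      rw [if_pos hxi, max_eq_left (le_of_lt hxi)]
      have habs : |x i| = x i := abs_of_pos hxi
      constructor
      · rcases le_total 0 (x i + t * w i) with hc | hc
        · rw [max_eq_left hc]
          have hval : t⁻¹ * (x i + t * w i - x i) - w i = 0 := by
            field_simp
            ring
          rw [hval]; simp [abs_nonneg]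
        · rw [max_eq_right hc]
          have hval : t⁻¹ * (0 - x i) - w i = -(t⁻¹ * x i) - w i := by ring
          have hkey : t⁻¹ * x i + w i ≤ 0 := by
            have : t⁻¹ * (x i + t * w i) ≤ 0 :=
              mul_nonpos_of_nonneg_of_nonpos (le_of_lt hinvpos) hc
            have hexp : t⁻¹ * (x i + t * w i) = t⁻¹ * x i + w i := by
              field_simp
            linarith [hexp ▸ this]
          have hkey2 : 0 < t⁻¹ * x i := by positivity
          rw [hval, abs_le]
          constructor
          · have := abs_nonneg (w i); linarith
          · have := neg_abs_le (w i); linarith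
      · intro hsmall
        rw [habs] at hsmall
        have : 0 ≤ x i + t * w i := by
          have h1 : -(t * |w i|) ≤ t * w i := by
            have := neg_abs_le (w i); nlinarith
          linarith
        rw [max_eq_left this]
        field_simp
        ring
  -- the limit
  rw [Metric.tendsto_nhdsWithin_nhds]
  intro ε hε
  set f : ℕ → ℝ := fun i => ‖w i‖ ^ (2:ℝ≥0∞).toReal with hf
  have hfs : Summable f := (lp.memℓp w).summable two_toReal_pos
  have hfnn : ∀ i, 0 ≤ f i := fun i => by
    rw [hf]; positivity
  -- choose N with small tail
  have htail : ∃ N : ℕ, 0 < N ∧ ∑' k, f (k + N) < ε ^ 2 := by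
    have hpart : Tendsto (fun n => ∑ i ∈ Finset.range n, f i) atTop (𝓝 (∑' i, f i)) :=
      hfs.hasSum.tendsto_sum_nat
    have htend : Tendsto (fun n => ∑' i, f i - ∑ i ∈ Finset.range n, f i) atTop (𝓝 0) := by
      have := hpart.const_sub (∑' i, f i)
      simpa using this
    have hev := htend.eventually (eventually_lt_nhds (show (0:ℝ) < ε ^ 2 by positivity))
    obtain ⟨N, hN1, hN2⟩ := ((eventually_gt_atTop 0).and hev).exists
    refine ⟨N, hN1, ?_⟩
    have := Summable.sum_add_tsum_nat_add N hfs
    linarith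
  obtain ⟨N, hNpos, hNtail⟩ := htail
  -- choose δ
  have hne : (Finset.range N).Nonempty := Finset.nonempty_range_iff.mpr hNpos.ne'
  set δ : ℝ := min 1 ((Finset.range N).inf' hne fun i => |x i| / (|w i| + 1)) with hδdef
  have hδpos : 0 < δ := by
    rw [hδdef]
    apply lt_min one_pos
    apply Finset.lt_inf'_iff _ |>.mpr
    intro i _
    have := hx i
    have : 0 < |x i| := abs_pos.mpr (hx i)
    positivity
  refine ⟨δ, hδpos, ?_⟩
  intro t ht hdist
  have htpos : 0 < t := ht
  have ht' : t ≠ 0 := ne_of_gt htpos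
  have htδ : t < δ := by
    rw [Real.dist_eq, sub_zero, abs_of_pos htpos] at hdist
    exact hdist
  -- zero coordinates for i < N
  have hzero : ∀ i < N, (t⁻¹ • (P (x + t • w) - P x) - b) i = 0 := by
    intro i hi
    rw [hcoord t ht' i]
    apply (hbound t htpos i).2
    have hδi : δ ≤ |x i| / (|w i| + 1) := by
      rw [hδdef]
      exact le_trans (min_le_right _ _) (Finset.inf'_le _ (Finset.mem_range.mpr hi))
    have hwpos : 0 < |w i| + 1 := by positivity
    have : t * (|w i| + 1) < |x i| := by
      have h1 : t < |x i| / (|w i| + 1) := lt_of_lt_of_le htδ hδi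
      calc t * (|w i| + 1) < (|x i| / (|w i| + 1)) * (|w i| + 1) := by
            exact mul_lt_mul_of_pos_right h1 hwpos
        _ = |x i| := by field_simp
    nlinarith
  -- norm bound
  rw [dist_eq_norm]
  set D : lp (fun _ : ℕ => ℝ) 2 := t⁻¹ • (P (x + t • w) - P x) - b with hD
  have hDle : ∀ i, ‖D i‖ ≤ ‖w i‖ := by
    intro i
    rw [Real.norm_eq_abs, Real.norm_eq_abs, hD, hcoord t ht' i]
    exact (hbound t htpos i).1
  have hDsum : Summable (fun i => ‖D i‖ ^ (2:ℝ≥0∞).toReal) :=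
    (lp.memℓp D).summable two_toReal_pos
  have hnorm : ‖D‖ ^ (2:ℝ≥0∞).toReal = ∑' i, ‖D i‖ ^ (2:ℝ≥0∞).toReal :=
    lp.norm_rpow_eq_tsum two_toReal_pos D
  have hsplit : ∑' i, ‖D i‖ ^ (2:ℝ≥0∞).toReal
      = ∑ i ∈ Finset.range N, ‖D i‖ ^ (2:ℝ≥0∞).toReal
        + ∑' k, ‖D (k + N)‖ ^ (2:ℝ≥0∞).toReal := (Summable.sum_add_tsum_nat_add N hDsum).symm
  have hfin0 : ∑ i ∈ Finset.range N, ‖D i‖ ^ (2:ℝ≥0∞).toReal = 0 := by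
    apply Finset.sum_eq_zero
    intro i hi
    have := hzero i (Finset.mem_range.mp hi)
    rw [hD, this]
    simp
  have htail2 : ∑' k, ‖D (k + N)‖ ^ (2:ℝ≥0∞).toReal ≤ ∑' k, f (k + N) := by
    apply Summable.tsum_le_tsum
    · intro k
      rw [hf]
      exact Real.rpow_le_rpow (norm_nonneg _) (hDle (k + N)) (le_of_lt two_toReal_pos)
    · exact (summable_nat_add_iff N).mpr hDsum
    · exact (summable_nat_add_iff N).mpr hfs
  have hlt : ‖D‖ ^ (2:ℝ≥0∞).toReal < ε ^ 2 := by
    rw [hnorm, hsplit, hfin0, zero_add]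
    exact lt_of_le_of_lt htail2 hNtail
  have h2' : (2 : ℝ≥0∞).toReal = ((2:ℕ):ℝ) := by norm_num
  rw [h2', Real.rpow_natCast] at hlt
  have hDnn := norm_nonneg D
  nlinarith
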